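/- Let n ≥ 3 and let G be a directed graph on Z_n in which every edge is of the form (j−1, j) or (j+1, j) (indices mod n), and suppose G has no directed cycle of length 2. Then G contains at most one directed cycle, and if it contains one, that cycle is Hamiltonian. -/

import Mathlib

variable {V : Type*}

/-- A directed cycle given as a nonempty list of distinct vertices
`v₁, …, v_k` with edges `v₁→v₂, …, v_{k-1}→v_k, v_k→v₁`. -/
def IsCycle (E : V → V → Prop) : List V → Prop
  | [] => False
  | v :: l => (v :: l).Nodup ∧ List.Chain E v (l ++ [v])

/-- A directed graph is acyclic if it contains no directed cycle. -/
def Acyclic (E : V → V → Prop) : Prop := ∀ l : List V, ¬ IsCycle E l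

/-- The subgraph of `E` induced by the vertex set `S`. -/
def Induced (E : V → V → Prop) (S : Set V) : V → V → Prop :=
  fun a b => a ∈ S ∧ b ∈ S ∧ E a b

/-- The graph obtained from `E` by deleting the edge `e`. -/
def Delete (E : V → V → Prop) (e : V × V) : V → V → Prop :=
  fun a b => E a b ∧ (a, b) ≠ e

/-- `(a, b)` is an edge of the directed cycle determined by the list `l`
(consecutive elements, wrapping around). -/
def CycleEdge (l : List V) (a b : V) : Prop :=
  ∃ i : Fin l.length, l.get i = a ∧ l.get ⟨(↑i + 1) % l.length, Nat.mod_lt _ i.pos⟩ = b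

/-- `G|_S` is a unicycle: the edge set of the induced subgraph on `S` is exactly
the edge set of a Hamiltonian directed cycle of `G|_S`. -/
def IsUnicycle (E : V → V → Prop) (S : Set V) : Prop :=
  ∃ l : List V, l ≠ [] ∧ l.Nodup ∧ (∀ v, v ∈ l ↔ v ∈ S) ∧
    ∀ a b, Induced E S a b ↔ CycleEdge l a b

lemma cycle_edge {E : V → V → Prop} {l : List V} (h : IsCycle E l)
    (i : ℕ) (hi : i < l.length) :
    E (l.get ⟨i, hi⟩)
      (l.get ⟨(i+1) % l.length, Nat.mod_lt _ (Nat.lt_of_le_of_lt (Nat.zero_le i) hi)⟩) := by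
  obtain ⟨v, t, rfl⟩ : ∃ v t, l = v :: t := by
    cases l with
    | nil => exact absurd h (by simp [IsCycle])
    | cons v t => exact ⟨v, t, rfl⟩
  have hc : List.Chain' E ((v :: t) ++ [v]) := h.2
  rw [List.Chain', List.isChain_iff_getElem] at hc
  have hlen : ((v :: t) ++ [v]).length = (v :: t).length + 1 := by simp
  have h0 : E (((v :: t) ++ [v]).get ⟨i, by simp at hi ⊢; omega⟩) (((v :: t) ++ [v]).get ⟨i+1, by simp at hi ⊢; omega⟩) :=
    hc i (by simp at hi ⊢; omega)
  rcases Nat.lt_or_ge (i+1) (v :: t).length with hlt | hge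
  · have e1 : ((v :: t) ++ [v]).get ⟨i, by omega⟩ = (v :: t).get ⟨i, hi⟩ :=
      List.getElem_append_left hi
    have e2 : ((v :: t) ++ [v]).get ⟨i+1, by omega⟩ = (v :: t).get ⟨i+1, hlt⟩ :=
      List.getElem_append_left hlt
    rw [e1, e2] at h0
    have : (i+1) % (v :: t).length = i + 1 := Nat.mod_eq_of_lt hlt
    simp only [List.get_eq_getElem] at h0 ⊢
    simp only [this]
    exact h0
  · have hik : i + 1 = (v :: t).length := by omega
    have e1 : ((v :: t) ++ [v]).get ⟨i, by omega⟩ = (v :: t).get ⟨i, hi⟩ :=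
      List.getElem_append_left hi
    have e2 : ((v :: t) ++ [v]).get ⟨i+1, by omega⟩ = v := by
      rw [List.get_eq_getElem, List.getElem_append_right (le_of_eq hik.symm)]
      simp
    rw [e1, e2] at h0
    have : (i+1) % (v :: t).length = 0 := by rw [hik]; simp
    convert h0 using 2
    show (v :: t).get ⟨(i+1) % (v::t).length, _⟩ = v
    rw [List.get_eq_getElem]
    simp only [this]
    rfl

lemma key {n : ℕ} (hn : 3 ≤ n) {E : ZMod n → ZMod n → Prop}
    (hE : ∀ a b, E a b → b = a + 1 ∨ b = a - 1)
    (hno2 : ¬ ∃ l : List (ZMod n), IsCycle E l ∧ l.length = 2)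
    {l : List (ZMod n)} (hl : IsCycle E l) :
    ∃ d : ZMod n, (d = 1 ∨ d = -1) ∧ l.length = n ∧
      (∀ (i : ℕ) (hi : i < l.length) (h0 : 0 < l.length),
        l.get ⟨i, hi⟩ = l.get ⟨0, h0⟩ + (i : ZMod n) * d) ∧
      (∀ v : ZMod n, E v (v + d)) := by
  haveI : NeZero n := ⟨by omega⟩
  haveI : Fact (1 < n) := ⟨by omega⟩
  have hpos : 0 < l.length := by
    cases l with
    | nil => exact absurd hl (by simp [IsCycle])
    | cons v t => simp
  have hnodup : l.Nodup := by
    cases l with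
    | nil => exact absurd hl (by simp [IsCycle])
    | cons v t => exact hl.1
  have geq : ∀ (a b : ℕ) (ha : a < l.length) (hb : b < l.length), a = b →
      l.get ⟨a, ha⟩ = l.get ⟨b, hb⟩ := by
    intro a b ha hb h; subst h; rfl
  set f : ℕ → ZMod n := fun i => l.get ⟨i % l.length, Nat.mod_lt _ hpos⟩ with hf
  have hfmod : ∀ i, f (i % l.length) = f i := by
    intro i; exact geq _ _ _ _ (Nat.mod_mod_of_dvd _ dvd_rfl)
  have hfget : ∀ (i : ℕ) (hi : i < l.length), f i = l.get ⟨i, hi⟩ := by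
    intro i hi; exact geq _ _ _ _ (Nat.mod_eq_of_lt hi)
  have hfinj : ∀ i j, i < l.length → j < l.length → f i = f j → i = j := by
    intro i j hi hj h
    rw [hfget i hi, hfget j hj] at h
    have := (List.Nodup.get_inj_iff hnodup).mp h
    exact congrArg Fin.val this
  have hedge : ∀ i : ℕ, E (f i) (f (i + 1)) := by
    intro i
    have h1 := cycle_edge hl (i % l.length) (Nat.mod_lt _ hpos)
    have e : (i % l.length + 1) % l.length = (i + 1) % l.length := Nat.mod_add_mod ..
    have := geq _ _ (Nat.mod_lt _ hpos) (Nat.mod_lt _ hpos) e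
    rw [this] at h1
    exact h1
  have hstep : ∀ i : ℕ, f (i + 1) = f i + 1 ∨ f (i + 1) = f i - 1 := fun i => hE _ _ (hedge i)
  -- rule out length 1 and 2
  have hk1 : l.length ≠ 1 := by
    intro h1
    have h := hstep 0
    have e : f 1 = f 0 := by
      rw [← hfmod 1, ← hfmod 0]; exact geq _ _ _ _ (by rw [h1])
    rw [e] at h
    rcases h with h | h
    · exact one_ne_zero (left_eq_add.mp h)
    · exact one_ne_zero (neg_eq_zero.mp (by rw [sub_eq_add_neg] at h; exact left_eq_add.mp h))
  have hk2 : l.length ≠ 2 := fun h2 => hno2 ⟨l, hl, h2⟩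
  have hk3 : 3 ≤ l.length := by omega
  -- no immediate backtracking
  have hnb : ∀ i : ℕ, f (i + 2) ≠ f i := by
    intro i h
    have h1 := hfinj ((i+2) % l.length) (i % l.length) (Nat.mod_lt _ hpos) (Nat.mod_lt _ hpos)
      (by rw [hfmod, hfmod, h])
    have h2 : (i : ℕ) ≡ i + 2 [MOD l.length] := by
      unfold Nat.ModEq; omega
    have := (Nat.modEq_iff_dvd' (by omega)).mp h2
    simp only [Nat.add_sub_cancel_left] at this
    have := Nat.le_of_dvd (by omega) this
    omega
  -- the common difference
  obtain ⟨d, hd, hd0⟩ : ∃ d : ZMod n, (d = 1 ∨ d = -1) ∧ f 1 = f 0 + d := by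
    rcases hstep 0 with h | h
    · exact ⟨1, Or.inl rfl, h⟩
    · exact ⟨-1, Or.inr rfl, by rw [h, sub_eq_add_neg]⟩
  have hne : (1 : ZMod n) ≠ -1 := by
    intro h
    have : ((2 : ℕ) : ZMod n) = 0 := by push_cast; linear_combination h
    rw [ZMod.natCast_eq_zero_iff] at this
    exact absurd (Nat.le_of_dvd (by norm_num) this) (by omega)
  have hall : ∀ i : ℕ, f (i + 1) = f i + d := by
    intro i
    induction i with
    | zero => exact hd0
    | succ m ih =>
      rcases hstep (m + 1) with h | h
      · rcases hd with hd' | hd'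
        · rw [h, hd']
        · exfalso; apply hnb m; rw [h, ih, hd']; ring
      · rcases hd with hd' | hd'
        · exfalso; apply hnb m; rw [h, ih, hd']; ring
        · rw [h, ih, hd']; ring_nf
  have hgeti : ∀ i : ℕ, f i = f 0 + (i : ZMod n) * d := by
    intro i
    induction i with
    | zero => simp
    | succ m ih => rw [hall m, ih]; push_cast; ring
  -- length = n
  have hkd : (l.length : ZMod n) * d = 0 := by
    have h1 : f l.length = f 0 := by
      rw [← hfmod l.length]; exact geq _ _ _ _ (by simp)
    have := hgeti l.length
    rw [h1] at this
    linear_combination -this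
  have hkn : (l.length : ZMod n) = 0 := by
    rcases hd with hd' | hd'
    · rwa [hd', mul_one] at hkd
    · rw [hd'] at hkd
      have : -(l.length : ZMod n) = 0 := by linear_combination hkd
      exact neg_eq_zero.mp this
  have hdvd : n ∣ l.length := (ZMod.natCast_eq_zero_iff _ _).mp hkn
  have hle : l.length ≤ n := by
    have := List.Nodup.length_le_card hnodup
    rwa [ZMod.card] at this
  have hlen : l.length = n := le_antisymm hle (Nat.le_of_dvd (by omega) hdvd)
  -- every vertex is in l
  have hmem : ∀ v : ZMod n, v ∈ l := by
    have hcard : l.toFinset.card = n := by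
      rw [List.toFinset_card_of_nodup hnodup, hlen]
    have huniv : l.toFinset = Finset.univ :=
      Finset.eq_univ_of_card _ (by rw [hcard, ZMod.card])
    intro v
    rw [← List.mem_toFinset, huniv]
    exact Finset.mem_univ v
  refine ⟨d, hd, hlen, ?_, ?_⟩
  · intro i hi h0
    have := hgeti i
    rw [hfget i hi, hfget 0 h0] at this
    exact this
  · intro v
    obtain ⟨i, hv⟩ := List.mem_iff_get.mp (hmem v)
    have h1 : f i.val = v := by rw [hfget i.val i.isLt]; exact hv
    have := hedge i.val
    rwa [h1, hall i.val, h1] at this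

theorem stmt8 (n : ℕ) (hn : 3 ≤ n) (E : ZMod n → ZMod n → Prop)
    (hE : ∀ a b, E a b → b = a + 1 ∨ b = a - 1)
    (hno2 : ¬ ∃ l : List (ZMod n), IsCycle E l ∧ l.length = 2) :
    (∀ l₁ l₂ : List (ZMod n), IsCycle E l₁ → IsCycle E l₂ → l₁ ~r l₂) ∧
      (∀ l : List (ZMod n), IsCycle E l → ∀ v : ZMod n, v ∈ l) := by
  haveI : NeZero n := ⟨by omega⟩
  haveI : Fact (1 < n) := ⟨by omega⟩
  have hham : ∀ l : List (ZMod n), IsCycle E l → ∀ v : ZMod n, v ∈ l := by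
    intro l hl v
    obtain ⟨d, hd, hlen, hget, hEd⟩ := key hn hE hno2 hl
    have hnodup : l.Nodup := by
      cases l with
      | nil => exact absurd hl (by simp [IsCycle])
      | cons a t => exact hl.1
    have hcard : l.toFinset.card = n := by rw [List.toFinset_card_of_nodup hnodup, hlen]
    have huniv : l.toFinset = Finset.univ :=
      Finset.eq_univ_of_card _ (by rw [hcard, ZMod.card])
    rw [← List.mem_toFinset, huniv]
    exact Finset.mem_univ v
  refine ⟨?_, hham⟩
  intro l₁ l₂ h1 h2
  obtain ⟨d₁, hd₁, hlen₁, hget₁, hE₁⟩ := key hn hE hno2 h1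
  obtain ⟨d₂, hd₂, hlen₂, hget₂, hE₂⟩ := key hn hE hno2 h2
  have h01 : (0 : ZMod n) ≠ 1 := fun h => one_ne_zero h.symm
  have two_cyc : (∀ v : ZMod n, E v (v + 1)) → (∀ v : ZMod n, E v (v + -1)) → False := by
    intro ha hb
    apply hno2
    refine ⟨[0, 1], ⟨?_, ?_⟩, rfl⟩
    · simp [h01]
    · have e1 : E 0 1 := by have := ha 0; rwa [zero_add] at this
      have e2 : E 1 0 := by have := hb 1; simpa using this
      simp [List.Chain, List.chain_cons, e1, e2]
  have hdd : d₁ = d₂ := by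
    rcases hd₁ with h1' | h1' <;> rcases hd₂ with h2' | h2'
    · rw [h1', h2']
    · exact absurd (two_cyc (h1' ▸ hE₁) (h2' ▸ hE₂)) not_false
    · exact absurd (two_cyc (h2' ▸ hE₂) (h1' ▸ hE₁)) not_false
    · rw [h1', h2']
  rw [← hdd] at hget₂
  have hdd1 : d₁ * d₁ = 1 := by rcases hd₁ with h | h <;> rw [h] <;> ring
  have hp1 : 0 < l₁.length := by omega
  have hp2 : 0 < l₂.length := by omega
  set a := l₁.get ⟨0, hp1⟩ with ha
  set b := l₂.get ⟨0, hp2⟩ with hb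
  set m := ((b - a) * d₁).val with hm
  have hmcast : ((m : ℕ) : ZMod n) = (b - a) * d₁ := ZMod.natCast_rightInverse _
  have hab : a + (m : ZMod n) * d₁ = b := by rw [hmcast]; linear_combination (b - a) * hdd1
  refine ⟨m, ?_⟩
  apply List.ext_get
  · simp [hlen₁, hlen₂]
  · intro i hi1 hi2
    rw [List.get_rotate]
    have e1 := hget₁ ((i + m) % l₁.length) (Nat.mod_lt _ hp1) hp1
    have e2 := hget₂ i hi2 hp2
    rw [e1, e2]
    have hcastmod : (((i + m) % l₁.length : ℕ) : ZMod n) = ((i + m : ℕ) : ZMod n) := by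
      rw [hlen₁]
      conv_rhs => rw [← Nat.mod_add_div (i + m) n]
      push_cast
      simp [ZMod.natCast_self]
    rw [hcastmod]
    push_cast
    linear_combination hab
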